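/- arXiv:2211.06795 — 2 statements merged into one kernel-verified Lean document; each statement's English description precedes it below -/
import Mathlib

section
/- For every finite nonempty subset A of ℤ², the edge boundary satisfies |∂A| ≥ 4√|A|; equivalently, |A| ≤ |∂A|²/16. -/
open MeasureTheory ProbabilityTheory

/-- Nearest-neighbor adjacency on the square lattice `ℤ²`. -/
def adjZ2 (u v : ℤ × ℤ) : Prop :=
  (u.1 - v.1).natAbs + (u.2 - v.2).natAbs = 1

instance : DecidableRel adjZ2 := fun u v => by unfold adjZ2; infer_instance

/-- The square lattice `ℤ²` as a simple graph. -/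
def latticeGraph : SimpleGraph (ℤ × ℤ) where
  Adj := adjZ2
  symm := by
    constructor
    intro u v h
    unfold adjZ2 at *
    omega
  loopless := by constructor; intro v h; simp [adjZ2] at h

/-- A set of vertices is connected if the induced subgraph is connected. -/
def connSub (A : Set (ℤ × ℤ)) : Prop := (latticeGraph.induce A).Connected

/-- A finite nonempty set is simply connected if it is connected and its
complement is connected. -/
def simplyConn (A : Set (ℤ × ℤ)) : Prop :=
  A.Nonempty ∧ A.Finite ∧ connSub A ∧ connSub Aᶜ

/-- The edge boundary of `A`: nearest-neighbor edges with exactly one endpoint in `A`. -/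
def edgeBoundary (A : Set (ℤ × ℤ)) : Set (Sym2 (ℤ × ℤ)) :=
  {e | ∃ u v, e = s(u, v) ∧ adjZ2 u v ∧ u ∈ A ∧ v ∉ A}

/-- `|∂A|`, the number of boundary edges of `A`. -/
noncomputable def bdCard (A : Set (ℤ × ℤ)) : ℕ := (edgeBoundary A).ncard

/-- The box `Λ_N = {v : |v|_∞ ≤ N}`. -/
def latticeBox (N : ℕ) : Set (ℤ × ℤ) := {v | |v.1| ≤ (N : ℤ) ∧ |v.2| ≤ (N : ℤ)}

/-- The collection `𝒜_N` of lattice animals: nonempty simply connected subsets of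
`Λ_N` containing the origin. -/
def animals (N : ℕ) : Set (Set (ℤ × ℤ)) :=
  {A | A ⊆ latticeBox N ∧ (0, 0) ∈ A ∧ simplyConn A}

/-- Total field weight `Σ_{i ∈ A} Σ_{α=0}^{q-1} h_i^α` of a set `A`. -/
noncomputable def fieldWeight (q : ℕ) (h : (ℤ × ℤ) × Fin q → ℝ) (A : Set (ℤ × ℤ)) : ℝ :=
  ∑ᶠ i ∈ A, ∑ α : Fin q, h (i, α)

/-- The greedy lattice animal `G_N` for field realization `h`. -/
noncomputable def gla (q N : ℕ) (h : (ℤ × ℤ) × Fin q → ℝ) : ℝ :=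
  sSup {r | ∃ A ∈ animals N, r = fieldWeight q h A / (bdCard A : ℝ)}

/-! ### auxiliary -/

lemma adj_horiz (a y : ℤ) : adjZ2 (a, y) (a + 1, y) := by unfold adjZ2; simp

lemma adj_vert (x a : ℤ) : adjZ2 (x, a) (x, a + 1) := by unfold adjZ2; simp

def rowSet (s : Finset (ℤ × ℤ)) (y : ℤ) : Finset ℤ :=
  (s.filter fun p => p.2 = y).image Prod.fst

def colSet (s : Finset (ℤ × ℤ)) (x : ℤ) : Finset ℤ :=
  (s.filter fun p => p.1 = x).image Prod.snd

lemma mem_rowSet {s : Finset (ℤ × ℤ)} {y x : ℤ} : x ∈ rowSet s y ↔ (x, y) ∈ s := by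
  simp only [rowSet, Finset.mem_image, Finset.mem_filter]
  constructor
  · rintro ⟨⟨a, b⟩, ⟨hs, rfl⟩, rfl⟩; exact hs
  · intro h; exact ⟨(x, y), ⟨h, rfl⟩, rfl⟩

lemma mem_colSet {s : Finset (ℤ × ℤ)} {x a : ℤ} : a ∈ colSet s x ↔ (x, a) ∈ s := by
  simp only [colSet, Finset.mem_image, Finset.mem_filter]
  constructor
  · rintro ⟨⟨u, b⟩, ⟨hs, rfl⟩, rfl⟩; exact hs
  · intro h; exact ⟨(x, a), ⟨h, rfl⟩, rfl⟩

noncomputable def rowAnchor (s : Finset (ℤ × ℤ)) (b : Bool) (y : ℤ) : ℤ :=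
  if h : (rowSet s y).Nonempty then
    (if b then (rowSet s y).max' h else (rowSet s y).min' h - 1)
  else 0

noncomputable def colAnchor (s : Finset (ℤ × ℤ)) (b : Bool) (x : ℤ) : ℤ :=
  if h : (colSet s x).Nonempty then
    (if b then (colSet s x).max' h else (colSet s x).min' h - 1)
  else 0

noncomputable def rowEdge (s : Finset (ℤ × ℤ)) (b : Bool) (y : ℤ) : Sym2 (ℤ × ℤ) :=
  s((rowAnchor s b y, y), (rowAnchor s b y + 1, y))

noncomputable def colEdge (s : Finset (ℤ × ℤ)) (b : Bool) (x : ℤ) : Sym2 (ℤ × ℤ) :=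
  s((x, colAnchor s b x), (x, colAnchor s b x + 1))

lemma rowEdge_ne_colEdge (s t : Finset (ℤ × ℤ)) (b b' : Bool) (y x : ℤ) :
    rowEdge s b y ≠ colEdge t b' x := by
  intro h
  rw [rowEdge, colEdge, Sym2.eq_iff] at h
  rcases h with ⟨h1, h2⟩ | ⟨h1, h2⟩ <;>
    simp only [Prod.mk.injEq] at h1 h2 <;> omega

lemma rowEdge_inj (s : Finset (ℤ × ℤ)) {b b' : Bool} {y y' : ℤ}
    (hy : (rowSet s y).Nonempty) (hy' : (rowSet s y').Nonempty)
    (h : rowEdge s b y = rowEdge s b' y') : b = b' ∧ y = y' := by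
  rw [rowEdge, rowEdge, Sym2.eq_iff] at h
  have hyy : y = y' ∧ rowAnchor s b y = rowAnchor s b' y' := by
    rcases h with ⟨h1, h2⟩ | ⟨h1, h2⟩ <;>
      simp only [Prod.mk.injEq] at h1 h2 <;> constructor <;> omega
  obtain ⟨rfl, ha⟩ := hyy
  refine ⟨?_, rfl⟩
  simp only [rowAnchor, dif_pos hy] at ha
  have hle : (rowSet s y).min' hy ≤ (rowSet s y).max' hy :=
    Finset.min'_le _ _ ((rowSet s y).max'_mem hy)
  cases b <;> cases b' <;> simp_all <;> omega

lemma colEdge_inj (s : Finset (ℤ × ℤ)) {b b' : Bool} {x x' : ℤ}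
    (hx : (colSet s x).Nonempty) (hx' : (colSet s x').Nonempty)
    (h : colEdge s b x = colEdge s b' x') : b = b' ∧ x = x' := by
  rw [colEdge, colEdge, Sym2.eq_iff] at h
  have hyy : x = x' ∧ colAnchor s b x = colAnchor s b' x' := by
    rcases h with ⟨h1, h2⟩ | ⟨h1, h2⟩ <;>
      simp only [Prod.mk.injEq] at h1 h2 <;> constructor <;> omega
  obtain ⟨rfl, ha⟩ := hyy
  refine ⟨?_, rfl⟩
  simp only [colAnchor, dif_pos hx] at ha
  have hle : (colSet s x).min' hx ≤ (colSet s x).max' hx :=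
    Finset.min'_le _ _ ((colSet s x).max'_mem hx)
  cases b <;> cases b' <;> simp_all <;> omega

lemma rowEdge_mem (A : Set (ℤ × ℤ)) (hfin : A.Finite) (b : Bool) (y : ℤ)
    (hy : (rowSet hfin.toFinset y).Nonempty) :
    rowEdge hfin.toFinset b y ∈ edgeBoundary A := by
  set s := hfin.toFinset with hsdef
  cases b with
  | true =>
    have hM : rowAnchor s true y = (rowSet s y).max' hy := by rw [rowAnchor, dif_pos hy]; rfl
    refine ⟨(rowAnchor s true y, y), (rowAnchor s true y + 1, y), rfl, adj_horiz _ _, ?_, ?_⟩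
    · rw [hM]
      exact hfin.mem_toFinset.1 (mem_rowSet.1 ((rowSet s y).max'_mem hy))
    · intro hc
      have h2 : (rowAnchor s true y + 1) ∈ rowSet s y := mem_rowSet.2 (hfin.mem_toFinset.2 hc)
      have hle : rowAnchor s true y + 1 ≤ (rowSet s y).max' hy := (rowSet s y).le_max' _ h2
      omega
  | false =>
    have hM : rowAnchor s false y = (rowSet s y).min' hy - 1 := by rw [rowAnchor, dif_pos hy]; rfl
    refine ⟨(rowAnchor s false y + 1, y), (rowAnchor s false y, y), Sym2.eq_swap.symm,
      ?_, ?_, ?_⟩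
    · have : rowAnchor s false y + 1 - 1 = rowAnchor s false y := by ring
      have h := adj_horiz (rowAnchor s false y) y
      unfold adjZ2 at h ⊢
      simpa using by omega
    · have h1 : (rowAnchor s false y + 1 : ℤ) = (rowSet s y).min' hy := by omega
      rw [show ((rowAnchor s false y + 1, y) : ℤ × ℤ) = ((rowSet s y).min' hy, y) by rw [h1]]
      exact hfin.mem_toFinset.1 (mem_rowSet.1 ((rowSet s y).min'_mem hy))
    · intro hc
      have h2 : (rowAnchor s false y) ∈ rowSet s y := mem_rowSet.2 (hfin.mem_toFinset.2 hc)
      have hle : (rowSet s y).min' hy ≤ rowAnchor s false y := (rowSet s y).min'_le _ h2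
      omega

lemma colEdge_mem (A : Set (ℤ × ℤ)) (hfin : A.Finite) (b : Bool) (x : ℤ)
    (hx : (colSet hfin.toFinset x).Nonempty) :
    colEdge hfin.toFinset b x ∈ edgeBoundary A := by
  set s := hfin.toFinset with hsdef
  cases b with
  | true =>
    have hM : colAnchor s true x = (colSet s x).max' hx := by rw [colAnchor, dif_pos hx]; rfl
    refine ⟨(x, colAnchor s true x), (x, colAnchor s true x + 1), rfl, adj_vert _ _, ?_, ?_⟩
    · rw [hM]
      exact hfin.mem_toFinset.1 (mem_colSet.1 ((colSet s x).max'_mem hx))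
    · intro hc
      have h2 : (colAnchor s true x + 1) ∈ colSet s x := mem_colSet.2 (hfin.mem_toFinset.2 hc)
      have hle : colAnchor s true x + 1 ≤ (colSet s x).max' hx := (colSet s x).le_max' _ h2
      omega
  | false =>
    have hM : colAnchor s false x = (colSet s x).min' hx - 1 := by rw [colAnchor, dif_pos hx]; rfl
    refine ⟨(x, colAnchor s false x + 1), (x, colAnchor s false x), Sym2.eq_swap.symm,
      ?_, ?_, ?_⟩
    · unfold adjZ2; simp
    · have h1 : (colAnchor s false x + 1 : ℤ) = (colSet s x).min' hx := by omega
      rw [show ((x, colAnchor s false x + 1) : ℤ × ℤ) = (x, (colSet s x).min' hx) by rw [h1]]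
      exact hfin.mem_toFinset.1 (mem_colSet.1 ((colSet s x).min'_mem hx))
    · intro hc
      have h2 : (colAnchor s false x) ∈ colSet s x := mem_colSet.2 (hfin.mem_toFinset.2 hc)
      have hle : (colSet s x).min' hx ≤ colAnchor s false x := (colSet s x).min'_le _ h2
      omega

lemma edgeBoundary_finite (A : Set (ℤ × ℤ)) (hfin : A.Finite) :
    (edgeBoundary A).Finite := by
  have hsub : edgeBoundary A ⊆
      (fun q : (ℤ × ℤ) × (ℤ × ℤ) => s(q.1, q.1 + q.2)) ''
        (A ×ˢ ({(1, 0), (-1, 0), (0, 1), (0, -1)} : Set (ℤ × ℤ))) := by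
    rintro e ⟨u, v, rfl, hadj, huA, hvA⟩
    refine ⟨(u, v - u), ⟨huA, ?_⟩, by simp⟩
    unfold adjZ2 at hadj
    simp only [Set.mem_insert_iff, Set.mem_singleton_iff, Prod.ext_iff, Prod.fst_sub,
      Prod.snd_sub]
    omega
  have hD : ({(1, 0), (-1, 0), (0, 1), (0, -1)} : Set (ℤ × ℤ)).Finite := Set.toFinite _
  exact ((hfin.prod hD).image _).subset hsub


/-- Isoperimetric inequality on `ℤ²`: every finite nonempty `A ⊆ ℤ²` satisfies
`|∂A| ≥ 4√|A|`; equivalently `|A| ≤ |∂A|²/16`. -/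
theorem lattice_isoperimetric_inequality (A : Set (ℤ × ℤ)) (hfin : A.Finite)
    (hne : A.Nonempty) :
    4 * Real.sqrt (A.ncard) ≤ (bdCard A : ℝ) ∧
      (A.ncard : ℝ) ≤ (bdCard A : ℝ) ^ 2 / 16 := by
  classical
  set s := hfin.toFinset with hsdef
  set P1 := s.image Prod.fst with hP1
  set P2 := s.image Prod.snd with hP2
  have hEfin : (edgeBoundary A).Finite := edgeBoundary_finite A hfin
  have hbd : bdCard A = hEfin.toFinset.card := by
    rw [bdCard, Set.ncard_eq_toFinset_card _ hEfin]
  have hrow : ∀ y ∈ P2, (rowSet s y).Nonempty := by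
    intro y hy
    obtain ⟨p, hp, rfl⟩ := Finset.mem_image.1 hy
    exact ⟨p.1, mem_rowSet.2 (by simpa using hp)⟩
  have hcol : ∀ x ∈ P1, (colSet s x).Nonempty := by
    intro x hx
    obtain ⟨p, hp, rfl⟩ := Finset.mem_image.1 hx
    exact ⟨p.2, mem_colSet.2 (by simpa using hp)⟩
  -- the injection from rows/columns into boundary edges
  have key : 2 * P2.card + 2 * P1.card ≤ hEfin.toFinset.card := by
    have hinj := Finset.card_le_card_of_injOn
      (f := fun q : (ℤ × Bool) ⊕ (ℤ × Bool) =>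
        Sum.elim (fun p : ℤ × Bool => rowEdge s p.2 p.1)
          (fun p : ℤ × Bool => colEdge s p.2 p.1) q)
      (s := (P2 ×ˢ (Finset.univ : Finset Bool)).disjSum (P1 ×ˢ (Finset.univ : Finset Bool)))
      (t := hEfin.toFinset) ?_ ?_
    · calc 2 * P2.card + 2 * P1.card
          = ((P2 ×ˢ (Finset.univ : Finset Bool)).disjSum
              (P1 ×ˢ (Finset.univ : Finset Bool))).card := by
            simp [Finset.card_disjSum, Finset.card_product, mul_comm]
        _ ≤ hEfin.toFinset.card := hinj
    · rintro (⟨y, b⟩ | ⟨x, b⟩) hq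
      · rw [Finset.mem_coe, Finset.inl_mem_disjSum, Finset.mem_product] at hq
        exact Finset.mem_coe.2 <| Set.Finite.mem_toFinset _ |>.2 (rowEdge_mem A hfin b y (hrow y hq.1))
      · rw [Finset.mem_coe, Finset.inr_mem_disjSum, Finset.mem_product] at hq
        exact Finset.mem_coe.2 <| Set.Finite.mem_toFinset _ |>.2 (colEdge_mem A hfin b x (hcol x hq.1))
    · rintro (⟨y, b⟩ | ⟨x, b⟩) hq (⟨y', b'⟩ | ⟨x', b'⟩) hq' heq
      · simp only [Sum.elim_inl] at heq
        rw [Finset.mem_coe, Finset.inl_mem_disjSum, Finset.mem_product] at hq hq'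
        obtain ⟨rfl, rfl⟩ := rowEdge_inj s (hrow y hq.1) (hrow y' hq'.1) heq
        rfl
      · exact absurd heq (rowEdge_ne_colEdge s s b b' y x')
      · exact absurd heq.symm (rowEdge_ne_colEdge s s b' b y' x)
      · simp only [Sum.elim_inr] at heq
        rw [Finset.mem_coe, Finset.inr_mem_disjSum, Finset.mem_product] at hq hq'
        obtain ⟨rfl, rfl⟩ := colEdge_inj s (hcol x hq.1) (hcol x' hq'.1) heq
        rfl
  -- |A| ≤ |P1| * |P2|
  have hsub : s ⊆ P1 ×ˢ P2 := by
    intro p hp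
    rw [Finset.mem_product]
    exact ⟨Finset.mem_image_of_mem _ hp, Finset.mem_image_of_mem _ hp⟩
  have hAcard : A.ncard = s.card := Set.ncard_eq_toFinset_card _ hfin
  have hcard : s.card ≤ P1.card * P2.card := by
    have := Finset.card_le_card hsub
    rwa [Finset.card_product] at this
  -- pass to the reals
  have hBR : (2 * P2.card + 2 * P1.card : ℝ) ≤ (bdCard A : ℝ) := by
    rw [hbd]; exact_mod_cast key
  have hNR : (A.ncard : ℝ) ≤ (P1.card : ℝ) * (P2.card : ℝ) := by
    rw [hAcard]; exact_mod_cast hcard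
  have hp1 : (0 : ℝ) ≤ (P1.card : ℝ) := Nat.cast_nonneg _
  have hp2 : (0 : ℝ) ≤ (P2.card : ℝ) := Nat.cast_nonneg _
  have hsq : 16 * (A.ncard : ℝ) ≤ (bdCard A : ℝ) ^ 2 := by
    nlinarith [sq_nonneg ((P1.card : ℝ) - (P2.card : ℝ)), sq_nonneg ((P1.card : ℝ) + (P2.card : ℝ))]
  have h2 : (A.ncard : ℝ) ≤ (bdCard A : ℝ) ^ 2 / 16 := by linarith
  refine ⟨?_, h2⟩
  have hBnn : (0 : ℝ) ≤ (bdCard A : ℝ) := Nat.cast_nonneg _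
  have h4 : 4 * Real.sqrt (A.ncard) = Real.sqrt (16 * (A.ncard : ℝ)) := by
    rw [show (16 : ℝ) = 4 ^ 2 by norm_num, Real.sqrt_mul (by positivity),
      Real.sqrt_sq (by norm_num : (0:ℝ) ≤ 4)]
  rw [h4]
  calc Real.sqrt (16 * (A.ncard : ℝ)) ≤ Real.sqrt ((bdCard A : ℝ) ^ 2) :=
        Real.sqrt_le_sqrt hsq
    _ = (bdCard A : ℝ) := Real.sqrt_sq hBnn
end

section
/- Let w : ℤ² → ℝ be any function (deterministic site weights), let N ≥ 1, and for a finite nonempty B ⊆ ℤ² write w(B) = Σ_{i∈B} w(i). Then for every finite nonempty connected subset A of Λ_N, one has w(A)/|∂A| ≤ max over all nonempty simply connected subsets B of Λ_N of |w(B)|/|∂B|. Consequently, the maximum of w(A)/|∂A| over all nonempty connected subsets A of Λ_N containing the origin is at most the maximum of |w(B)|/|∂B| over all nonempty simply connected subsets B of Λ_N. -/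
open MeasureTheory ProbabilityTheory

-- ==================== auxiliary ====================

section Aux

abbrev P2 := ℤ × ℤ

lemma adjZ2_symm {u v : P2} (h : adjZ2 u v) : adjZ2 v u := by unfold adjZ2 at *; omega

/-- one step inside `S` -/
def rstep (S : Set P2) (a b : P2) : Prop := b ∈ S ∧ adjZ2 a b

/-- reachability inside `S` -/
def reachIn (S : Set P2) (a b : P2) : Prop :=
  a ∈ S ∧ Relation.ReflTransGen (rstep S) a b

lemma reachIn.refl {S : Set P2} {a : P2} (ha : a ∈ S) : reachIn S a a :=
  ⟨ha, Relation.ReflTransGen.refl⟩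

lemma reachIn.tail {S : Set P2} {a b c : P2} (h : reachIn S a b) (hc : c ∈ S)
    (hadj : adjZ2 b c) : reachIn S a c :=
  ⟨h.1, h.2.tail ⟨hc, hadj⟩⟩

lemma reachIn.mem_right {S : Set P2} {a b : P2} (h : reachIn S a b) : b ∈ S := by
  rcases h with ⟨ha, h⟩
  induction h with
  | refl => exact ha
  | tail _ h2 _ => exact h2.1

lemma reachIn.trans {S : Set P2} {a b c : P2} (h1 : reachIn S a b) (h2 : reachIn S b c) :
    reachIn S a c := ⟨h1.1, h1.2.trans h2.2⟩

lemma reachIn.symm {S : Set P2} {a b : P2} (h : reachIn S a b) : reachIn S b a := by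
  rcases h with ⟨ha, h⟩
  induction h with
  | refl => exact reachIn.refl ha
  | tail _ h2 ih =>
    exact ⟨h2.1, Relation.ReflTransGen.head ⟨ih.1, adjZ2_symm h2.2⟩ ih.2⟩

lemma reachIn.mono {S T : Set P2} (hST : S ⊆ T) {a b : P2} (h : reachIn S a b) :
    reachIn T a b := by
  rcases h with ⟨ha, h⟩
  refine ⟨hST ha, ?_⟩
  induction h with
  | refl => exact Relation.ReflTransGen.refl
  | tail _ h2 ih => exact ih.tail ⟨hST h2.1, h2.2⟩

/-- connected component of `x` inside `S` -/
def comp (S : Set P2) (x : P2) : Set P2 := {y | reachIn S x y}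

lemma comp_subset {S : Set P2} {x : P2} : comp S x ⊆ S := fun _ hy => hy.mem_right

lemma mem_comp_self {S : Set P2} {x : P2} (hx : x ∈ S) : x ∈ comp S x := reachIn.refl hx

lemma reachIn_comp {S : Set P2} {x y : P2} (h : reachIn S x y) : reachIn (comp S x) x y := by
  rcases h with ⟨hx, h⟩
  refine ⟨mem_comp_self hx, ?_⟩
  induction h with
  | refl => exact Relation.ReflTransGen.refl
  | @tail b c h1 h2 ih =>
    exact ih.tail ⟨⟨hx, Relation.ReflTransGen.tail h1 h2⟩, h2.2⟩

lemma comp_eq_of_mem {S : Set P2} {x y : P2} (h : y ∈ comp S x) : comp S y = comp S x := by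
  ext z
  exact ⟨fun hz => (h : reachIn S x y).trans hz,
    fun hz => (h : reachIn S x y).symm.trans hz⟩

end Aux

section Aux2

lemma mem_box_iff {N : ℕ} {v : P2} :
    v ∈ latticeBox N ↔ (-(N : ℤ) ≤ v.1 ∧ v.1 ≤ N) ∧ (-(N : ℤ) ≤ v.2 ∧ v.2 ≤ N) := by
  simp [latticeBox, abs_le]

/-- horizontal move to the right -/
lemma reach_right {S : Set P2} (y : ℤ) (a : ℤ) :
    ∀ n : ℕ, (∀ t : ℤ, a ≤ t → t ≤ a + n → ((t, y) : P2) ∈ S) →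
      reachIn S (a, y) (a + n, y) := by
  intro n
  induction n with
  | zero => intro h; simpa using reachIn.refl (h a le_rfl (by simp))
  | succ n ih =>
    intro h
    have h1 : reachIn S (a, y) (a + n, y) := ih (fun t h1 h2 => h t h1 (by push_cast; omega))
    have h2 : reachIn S (a, y) (a + (n : ℤ) + 1, y) :=
      h1.tail (h (a + (n : ℤ) + 1) (by omega) (by push_cast; omega))
        (by unfold adjZ2; simp; try omega)
    have heq : a + ((n + 1 : ℕ) : ℤ) = a + (n : ℤ) + 1 := by push_cast; ring
    rw [heq]
    exact h2

lemma reach_horiz {S : Set P2} {y a b : ℤ}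
    (h : ∀ t : ℤ, min a b ≤ t → t ≤ max a b → ((t, y) : P2) ∈ S) :
    reachIn S (a, y) (b, y) := by
  rcases le_total a b with hab | hab
  · have := reach_right (S := S) y a (b - a).toNat
      (fun t h1 h2 => h t (by omega) (by omega))
    rw [show a + ((b - a).toNat : ℤ) = b by omega] at this
    exact this
  · have := reach_right (S := S) y b (a - b).toNat
      (fun t h1 h2 => h t (by omega) (by omega))
    rw [show b + ((a - b).toNat : ℤ) = a by omega] at this
    exact this.symm

lemma reach_up {S : Set P2} (x : ℤ) (a : ℤ) :
    ∀ n : ℕ, (∀ t : ℤ, a ≤ t → t ≤ a + n → ((x, t) : P2) ∈ S) →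
      reachIn S (x, a) (x, a + n) := by
  intro n
  induction n with
  | zero => intro h; simpa using reachIn.refl (h a le_rfl (by simp))
  | succ n ih =>
    intro h
    have h1 : reachIn S (x, a) (x, a + n) := ih (fun t h1 h2 => h t h1 (by push_cast; omega))
    have h2 : reachIn S (x, a) (x, a + (n : ℤ) + 1) :=
      h1.tail (h (a + (n : ℤ) + 1) (by omega) (by push_cast; omega))
        (by unfold adjZ2; simp; try omega)
    have heq : a + ((n + 1 : ℕ) : ℤ) = a + (n : ℤ) + 1 := by push_cast; ring
    rw [heq]
    exact h2

lemma reach_vert {S : Set P2} {x a b : ℤ}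
    (h : ∀ t : ℤ, min a b ≤ t → t ≤ max a b → ((x, t) : P2) ∈ S) :
    reachIn S (x, a) (x, b) := by
  rcases le_total a b with hab | hab
  · have := reach_up (S := S) x a (b - a).toNat
      (fun t h1 h2 => h t (by omega) (by omega))
    rw [show a + ((b - a).toNat : ℤ) = b by omega] at this
    exact this
  · have := reach_up (S := S) x b (a - b).toNat
      (fun t h1 h2 => h t (by omega) (by omega))
    rw [show b + ((a - b).toNat : ℤ) = a by omega] at this
    exact this.symm

/-- conversion between `connSub` and `reachIn`-connectivity -/
lemma connSub_iff {S : Set P2} :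
    connSub S ↔ S.Nonempty ∧ ∀ x ∈ S, ∀ y ∈ S, reachIn S x y := by
  constructor
  · intro h
    have hpre := h.preconnected
    have hne' : S.Nonempty := Set.nonempty_coe_sort.mp h.nonempty
    refine ⟨hne', fun x hx y hy => ?_⟩
    obtain ⟨wlk⟩ := hpre ⟨x, hx⟩ ⟨y, hy⟩
    clear hpre
    have key : ∀ (u v : S) (_ : (latticeGraph.induce S).Walk u v), reachIn S u v := by
      intro u v wlk
      induction wlk with
      | nil => exact reachIn.refl (Subtype.coe_prop _)
      | @cons p q r h _ ih =>
        have hadj : adjZ2 (p : P2) (q : P2) := h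
        exact ⟨p.2, Relation.ReflTransGen.head ⟨q.2, hadj⟩ ih.2⟩
    exact key _ _ wlk
  · rintro ⟨⟨x0, hx0⟩, h⟩
    rw [connSub, SimpleGraph.connected_iff]
    refine ⟨?_, ⟨⟨x0, hx0⟩⟩⟩
    rintro ⟨u, hu⟩ ⟨v, hv⟩
    have hr := h u hu v hv
    have key : ∀ b, Relation.ReflTransGen (rstep S) u b →
        ∃ hb : b ∈ S, (latticeGraph.induce S).Reachable ⟨u, hu⟩ ⟨b, hb⟩ := by
      intro b hb
      induction hb with
      | refl => exact ⟨hu, SimpleGraph.Reachable.refl _⟩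
      | tail h1 h2 ih =>
        obtain ⟨hb, hreach⟩ := ih
        exact ⟨h2.1, hreach.trans (SimpleGraph.Adj.reachable h2.2)⟩
    obtain ⟨hb, hreach⟩ := key v hr.2
    exact hreach

lemma connSub_box (N : ℕ) : connSub (latticeBox N) := by
  rw [connSub_iff]
  have key : ∀ u ∈ latticeBox N, reachIn (latticeBox N) u (((0 : ℤ), (0 : ℤ)) : P2) := by
    rintro ⟨x, y⟩ hu
    rw [mem_box_iff] at hu
    have h1 : reachIn (latticeBox N) (x, y) (0, y) :=
      reach_horiz (fun t h1 h2 => by rw [mem_box_iff]; simp at hu ⊢; omega)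
    have h2 : reachIn (latticeBox N) ((0 : ℤ), y) (0, 0) :=
      reach_vert (fun t h1 h2 => by rw [mem_box_iff]; simp at hu ⊢; omega)
    exact h1.trans h2
  exact ⟨⟨(0, 0), by rw [mem_box_iff]; simp⟩,
    fun u hu v hv => (key u hu).trans (key v hv).symm⟩

lemma mem_boxCompl {N : ℕ} {v : P2} :
    v ∈ (latticeBox N)ᶜ ↔ (v.1 < -(N : ℤ) ∨ (N : ℤ) < v.1) ∨ (v.2 < -(N : ℤ) ∨ (N : ℤ) < v.2) := by
  rw [Set.mem_compl_iff, mem_box_iff]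
  omega

lemma reach_boxCompl (N : ℕ) : ∀ u ∈ (latticeBox N)ᶜ,
    reachIn (latticeBox N)ᶜ u (((N : ℤ) + 1, (N : ℤ) + 1) : P2) := by
  rintro ⟨x, y⟩ hu
  rw [mem_boxCompl] at hu
  simp only at hu
  rcases (by omega : x < -(N : ℤ) ∨ (N : ℤ) < x ∨ y < -(N : ℤ) ∨ (N : ℤ) < y) with hx | hx | hy | hy
  · have h1 : reachIn (latticeBox N)ᶜ (x, y) (x, (N : ℤ) + 1) :=
      reach_vert (fun t h1 h2 => by rw [mem_boxCompl]; simp; try omega)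
    have h2 : reachIn (latticeBox N)ᶜ (x, (N : ℤ) + 1) ((N : ℤ) + 1, (N : ℤ) + 1) :=
      reach_horiz (fun t h1 h2 => by rw [mem_boxCompl]; simp; try omega)
    exact h1.trans h2
  · have h1 : reachIn (latticeBox N)ᶜ (x, y) (x, (N : ℤ) + 1) :=
      reach_vert (fun t h1 h2 => by rw [mem_boxCompl]; simp; try omega)
    have h2 : reachIn (latticeBox N)ᶜ (x, (N : ℤ) + 1) ((N : ℤ) + 1, (N : ℤ) + 1) :=
      reach_horiz (fun t h1 h2 => by rw [mem_boxCompl]; simp; try omega)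
    exact h1.trans h2
  · have h1 : reachIn (latticeBox N)ᶜ (x, y) ((N : ℤ) + 1, y) :=
      reach_horiz (fun t h1 h2 => by rw [mem_boxCompl]; simp; try omega)
    have h2 : reachIn (latticeBox N)ᶜ ((N : ℤ) + 1, y) ((N : ℤ) + 1, (N : ℤ) + 1) :=
      reach_vert (fun t h1 h2 => by rw [mem_boxCompl]; simp; try omega)
    exact h1.trans h2
  · have h1 : reachIn (latticeBox N)ᶜ (x, y) ((N : ℤ) + 1, y) :=
      reach_horiz (fun t h1 h2 => by rw [mem_boxCompl]; simp; try omega)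
    have h2 : reachIn (latticeBox N)ᶜ ((N : ℤ) + 1, y) ((N : ℤ) + 1, (N : ℤ) + 1) :=
      reach_vert (fun t h1 h2 => by rw [mem_boxCompl]; simp; try omega)
    exact h1.trans h2

lemma connSub_boxCompl (N : ℕ) : connSub (latticeBox N)ᶜ := by
  rw [connSub_iff]
  refine ⟨⟨((N : ℤ) + 1, (N : ℤ) + 1), by rw [mem_boxCompl]; simp⟩,
    fun u hu v hv => (reach_boxCompl N u hu).trans (reach_boxCompl N v hv).symm⟩

lemma reach_univ (u v : P2) : reachIn (Set.univ) u v := by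
  obtain ⟨x, y⟩ := u
  obtain ⟨x', y'⟩ := v
  exact (reach_horiz (a := x) (b := x') (y := y) (fun _ _ _ => Set.mem_univ _)).trans
    (reach_vert (fun _ _ _ => Set.mem_univ _))

lemma box_finite (N : ℕ) : (latticeBox N).Finite := by
  have : latticeBox N ⊆ (Set.Icc (-(N : ℤ)) N) ×ˢ (Set.Icc (-(N : ℤ)) N) := by
    rintro ⟨x, y⟩ hu
    rw [mem_box_iff] at hu
    simp only at hu
    constructor <;> simp <;> omega
  exact Set.Finite.subset ((Set.finite_Icc _ _).prod (Set.finite_Icc _ _)) this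

lemma boxCompl_infinite (N : ℕ) : ((latticeBox N)ᶜ).Infinite := by
  apply Set.infinite_of_injective_forall_mem (f := fun k : ℕ => (((N : ℤ) + 1, (k : ℤ)) : P2))
  · intro a b hab
    simpa using hab
  · intro k
    rw [mem_boxCompl]; simp

end Aux2

section Aux3

/-- every infinite component of `Aᶜ` contains the complement of the box -/
lemma boxCompl_subset_infinite_comp {N : ℕ} {A : Set P2} (hA : A ⊆ latticeBox N)
    {x : P2} (hx : x ∈ Aᶜ) (hinf : (comp Aᶜ x).Infinite) :
    (latticeBox N)ᶜ ⊆ comp Aᶜ x := by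
  have hbox : ¬ comp Aᶜ x ⊆ latticeBox N := fun hsub => hinf ((box_finite N).subset hsub)
  obtain ⟨y, hy, hynot⟩ := Set.not_subset.mp hbox
  intro z hz
  have h1 : reachIn (latticeBox N)ᶜ y z := (reach_boxCompl N y hynot).trans (reach_boxCompl N z hz).symm
  have h2 : reachIn Aᶜ y z := h1.mono (Set.compl_subset_compl.mpr hA)
  exact (hy : reachIn Aᶜ x y).trans h2

/-- finite components of `Aᶜ` lie in the box -/
lemma finite_comp_subset_box {N : ℕ} {A : Set P2} (hA : A ⊆ latticeBox N)
    {x : P2} (hx : x ∈ Aᶜ) (hfin : (comp Aᶜ x).Finite) :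
    comp Aᶜ x ⊆ latticeBox N := by
  intro y hy
  by_contra hynot
  have hsub : (latticeBox N)ᶜ ⊆ comp Aᶜ x := by
    intro z hz
    have h1 : reachIn (latticeBox N)ᶜ y z :=
      (reach_boxCompl N y hynot).trans (reach_boxCompl N z hz).symm
    exact (hy : reachIn Aᶜ x y).trans (h1.mono (Set.compl_subset_compl.mpr hA))
  exact absurd hfin (Set.Infinite.mono hsub (boxCompl_infinite N))

/-- dichotomy: either `Aᶜ` is connected or it has a finite component -/
lemma compl_conn_or_hole {N : ℕ} {A : Set P2} (hA : A ⊆ latticeBox N) :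
    connSub Aᶜ ∨ ∃ x ∈ Aᶜ, (comp Aᶜ x).Finite := by
  by_cases hex : ∃ x ∈ Aᶜ, (comp Aᶜ x).Finite
  · exact Or.inr hex
  · push_neg at hex
    left
    rw [connSub_iff]
    have hc : (((N : ℤ) + 1, (N : ℤ) + 1) : P2) ∈ Aᶜ := by
      intro h
      have := hA h
      rw [mem_box_iff] at this
      simp at this
      try omega
    refine ⟨⟨_, hc⟩, fun u hu v hv => ?_⟩
    have key : ∀ z ∈ Aᶜ, reachIn Aᶜ z (((N : ℤ) + 1, (N : ℤ) + 1) : P2) := by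
      intro z hz
      have hinf : ¬ (comp Aᶜ z).Finite := hex z hz
      have hsub := boxCompl_subset_infinite_comp hA hz hinf
      exact hsub (by rw [mem_boxCompl]; simp)
    exact (key u hu).trans (key v hv).symm

/-- first-entrance lemma -/
lemma exists_entry {A : Set P2} {y a : P2} (ha : a ∈ A) (hy : y ∉ A) :
    ∃ p q, reachIn Aᶜ y p ∧ adjZ2 p q ∧ q ∈ A := by
  have h : Relation.ReflTransGen (rstep Set.univ) y a := (reach_univ y a).2
  have key : ∀ z, Relation.ReflTransGen (rstep Set.univ) z a →
      (z ∈ A ∨ ∃ p q, reachIn Aᶜ z p ∧ adjZ2 p q ∧ q ∈ A) := by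
    intro z hz
    induction hz using Relation.ReflTransGen.head_induction_on with
    | refl => exact Or.inl ha
    | @head b c hstep htail ih =>
      by_cases hb : b ∈ A
      · exact Or.inl hb
      · rcases ih with hc | ⟨p, q, hr, hadj, hq⟩
        · exact Or.inr ⟨b, c, reachIn.refl hb, hstep.2, hc⟩
        · exact Or.inr ⟨p, q, ⟨hb, Relation.ReflTransGen.head ⟨hr.1, hstep.2⟩ hr.2⟩, hadj, hq⟩
  rcases key y h with h' | h'
  · exact absurd h' hy
  · exact h'

lemma adj_mem_finset {u : P2} : {v : P2 | adjZ2 u v}.Finite := by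
  apply Set.Finite.subset ((((Set.finite_singleton ((u.1, u.2 - 1) : P2)).insert
    (u.1, u.2 + 1)).insert (u.1 - 1, u.2)).insert (u.1 + 1, u.2))
  intro v hv
  have hv' : adjZ2 u v := hv
  unfold adjZ2 at hv'
  simp only [Set.mem_insert_iff, Set.mem_singleton_iff, Prod.ext_iff]
  omega

lemma edgeBoundary_finite_s6 {B : Set P2} (hB : B.Finite) : (edgeBoundary B).Finite := by
  have hnb : {v : P2 | ∃ u ∈ B, adjZ2 u v}.Finite := by
    have : {v : P2 | ∃ u ∈ B, adjZ2 u v} ⊆ ⋃ u ∈ B, {v | adjZ2 u v} := by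
      intro v ⟨u, hu, hadj⟩
      exact Set.mem_biUnion hu hadj
    exact Set.Finite.subset (hB.biUnion (fun u _ => adj_mem_finset)) this
  have : edgeBoundary B ⊆ (fun p : P2 × P2 => s(p.1, p.2)) '' (B ×ˢ {v | ∃ u ∈ B, adjZ2 u v}) := by
    rintro e ⟨u, v, rfl, hadj, hu, hv⟩
    exact ⟨(u, v), ⟨hu, ⟨u, hu, hadj⟩⟩, rfl⟩
  exact Set.Finite.subset ((hB.prod hnb).image _) this

lemma edgeBoundary_nonempty {B : Set P2} (hB : B.Finite) (hne : B.Nonempty) :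
    (edgeBoundary B).Nonempty := by
  obtain ⟨u, hu, hmax⟩ := Set.exists_max_image B (fun p => p.1) hB hne
  refine ⟨s(u, (u.1 + 1, u.2)), u, (u.1 + 1, u.2), rfl, by unfold adjZ2; simp; try omega, hu, ?_⟩
  intro hmem
  have := hmax _ hmem
  simp at this
  try omega

lemma bdCard_pos {B : Set P2} (hB : B.Finite) (hne : B.Nonempty) : 0 < bdCard B := by
  rw [bdCard, Set.ncard_pos (edgeBoundary_finite_s6 hB)]
  exact edgeBoundary_nonempty hB hne

end Aux3

section Aux4

variable {N : ℕ} {A : Set P2} {x : P2}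

/-- neighbours of a hole that are not in `A` are in the hole -/
lemma hole_absorb (hx : x ∉ A) {u v : P2} (hu : u ∈ comp Aᶜ x) (hadj : adjZ2 u v)
    (hv : v ∉ A) : v ∈ comp Aᶜ x :=
  (hu : reachIn Aᶜ x u).tail hv hadj

lemma hole_connSub (hx : x ∉ A) : connSub (comp Aᶜ x) := by
  rw [connSub_iff]
  refine ⟨⟨x, mem_comp_self hx⟩, fun u hu v hv => ?_⟩
  exact (reachIn_comp (hu : reachIn Aᶜ x u)).symm.trans (reachIn_comp (hv : reachIn Aᶜ x v))

/-- `Hᶜ` is connected when `A` is connected and `H` is a hole of `A` -/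
lemma hole_compl_connSub (hne : A.Nonempty) (hconn : connSub A) (hx : x ∉ A) :
    connSub (comp Aᶜ x)ᶜ := by
  obtain ⟨a0, ha0⟩ := hne
  have hAsub : A ⊆ (comp Aᶜ x)ᶜ := fun p hp hpc => (comp_subset hpc) hp
  have hreachA : ∀ z ∈ A, reachIn (comp Aᶜ x)ᶜ z a0 := by
    intro z hz
    exact (((connSub_iff.mp hconn).2 z hz a0 ha0)).mono hAsub
  rw [connSub_iff]
  have key : ∀ y ∈ (comp Aᶜ x)ᶜ, reachIn (comp Aᶜ x)ᶜ y a0 := by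
    intro y hy
    by_cases hyA : y ∈ A
    · exact hreachA y hyA
    · -- y in another component of Aᶜ
      have hdisj : comp Aᶜ y ⊆ (comp Aᶜ x)ᶜ := by
        intro z hz hzx
        have h1 : y ∈ comp Aᶜ z := (hz : reachIn Aᶜ y z).symm
        have h2 : comp Aᶜ z = comp Aᶜ x := comp_eq_of_mem hzx
        exact hy (h2 ▸ h1)
      obtain ⟨p, q, hr, hadj, hq⟩ := exists_entry ha0 hyA
      have h1 : reachIn (comp Aᶜ x)ᶜ y p := (reachIn_comp hr).mono hdisj
      have h2 : reachIn (comp Aᶜ x)ᶜ y q := h1.tail (hAsub hq) hadj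
      exact h2.trans (hreachA q hq)
  refine ⟨⟨a0, hAsub ha0⟩, fun u hu v hv => (key u hu).trans (key v hv).symm⟩

/-- `A ∪ H` is connected -/
lemma union_hole_connSub (hne : A.Nonempty) (hconn : connSub A) (hx : x ∉ A) :
    connSub (A ∪ comp Aᶜ x) := by
  obtain ⟨a0, ha0⟩ := hne
  rw [connSub_iff]
  have key : ∀ y ∈ A ∪ comp Aᶜ x, reachIn (A ∪ comp Aᶜ x) y a0 := by
    rintro y (hy | hy)
    · exact ((connSub_iff.mp hconn).2 y hy a0 ha0).mono Set.subset_union_left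
    · obtain ⟨p, q, hr, hadj, hq⟩ := exists_entry ha0 hx
      have h1 : reachIn (A ∪ comp Aᶜ x) y x :=
        ((reachIn_comp (hy : reachIn Aᶜ x y)).symm).mono Set.subset_union_right
      have h2 : reachIn (A ∪ comp Aᶜ x) x p := (reachIn_comp hr).mono Set.subset_union_right
      have h3 : reachIn (A ∪ comp Aᶜ x) x q := h2.tail (Set.mem_union_left _ hq) hadj
      exact (h1.trans h3).trans
        (((connSub_iff.mp hconn).2 q hq a0 ha0).mono Set.subset_union_left)
  exact ⟨⟨a0, Set.mem_union_left _ ha0⟩, fun u hu v hv => (key u hu).trans (key v hv).symm⟩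

/-- the boundary decomposition -/
lemma edgeBoundary_decomp (hx : x ∉ A) :
    edgeBoundary A = edgeBoundary (A ∪ comp Aᶜ x) ∪ edgeBoundary (comp Aᶜ x) := by
  ext e
  constructor
  · rintro ⟨u, v, rfl, hadj, hu, hv⟩
    by_cases hvH : v ∈ comp Aᶜ x
    · right
      refine ⟨v, u, Sym2.eq_swap, adjZ2_symm hadj, hvH, fun huH => ?_⟩
      exact (comp_subset huH) hu
    · left
      exact ⟨u, v, rfl, hadj, Set.mem_union_left _ hu, fun h => h.elim hv hvH⟩
  · rintro (⟨u, v, rfl, hadj, hu, hv⟩ | ⟨u, v, rfl, hadj, hu, hv⟩)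
    · rcases hu with hu | hu
      · exact ⟨u, v, rfl, hadj, hu, fun h => hv (Set.mem_union_left _ h)⟩
      · exfalso
        have hvA : v ∉ A := fun h => hv (Set.mem_union_left _ h)
        exact hv (Set.mem_union_right _ (hole_absorb hx hu hadj hvA))
    · have hvA : v ∈ A := by
        by_contra hvA
        exact hv (hole_absorb hx hu hadj hvA)
      exact ⟨v, u, Sym2.eq_swap, adjZ2_symm hadj, hvA, fun h => (comp_subset hu) h⟩

lemma edgeBoundary_decomp_disjoint (hx : x ∉ A) :
    Disjoint (edgeBoundary (A ∪ comp Aᶜ x)) (edgeBoundary (comp Aᶜ x)) := by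
  rw [Set.disjoint_left]
  rintro e ⟨u, v, rfl, hadj, hu, hv⟩ ⟨p, q, hpq, hadj', hp, hq⟩
  have hqA : q ∈ A := by
    by_contra hqA
    exact hq (hole_absorb hx hp hadj' hqA)
  rw [Sym2.eq_iff] at hpq
  rcases hpq with ⟨rfl, rfl⟩ | ⟨rfl, rfl⟩
  · exact hv (Set.mem_union_left _ hqA)
  · exact hv (Set.mem_union_right _ hp)

end Aux4

section Main

lemma mediant_le {c1 c2 b1 b2 M : ℝ} (h1 : 0 < b1) (h2 : 0 < b2)
    (hm1 : c1 / b1 ≤ M) (hm2 : c2 / b2 ≤ M) : (c1 + c2) / (b1 + b2) ≤ M := by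
  rw [div_le_iff₀ h1] at hm1
  rw [div_le_iff₀ h2] at hm2
  rw [div_le_iff₀ (by linarith)]
  nlinarith

lemma mset_finite (w : P2 → ℝ) (N : ℕ) :
    {r : ℝ | ∃ B : Set P2, B ⊆ latticeBox N ∧ simplyConn B ∧
      r = |∑ᶠ i ∈ B, w i| / (bdCard B : ℝ)}.Finite := by
  have h1 : {B : Set P2 | B ⊆ latticeBox N ∧ simplyConn B}.Finite :=
    ((box_finite N).finite_subsets).subset (fun B hB => hB.1)
  have h2 : {r : ℝ | ∃ B : Set P2, B ⊆ latticeBox N ∧ simplyConn B ∧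
      r = |∑ᶠ i ∈ B, w i| / (bdCard B : ℝ)} ⊆
      (fun B => |∑ᶠ i ∈ B, w i| / (bdCard B : ℝ)) '' {B | B ⊆ latticeBox N ∧ simplyConn B} := by
    rintro r ⟨B, hB1, hB2, rfl⟩
    exact ⟨B, ⟨hB1, hB2⟩, rfl⟩
  exact (h1.image _).subset h2

lemma mset_sSup_nonneg (w : P2 → ℝ) (N : ℕ) :
    0 ≤ sSup {r : ℝ | ∃ B : Set P2, B ⊆ latticeBox N ∧ simplyConn B ∧
      r = |∑ᶠ i ∈ B, w i| / (bdCard B : ℝ)} := by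
  have hmem : |∑ᶠ i ∈ latticeBox N, w i| / (bdCard (latticeBox N) : ℝ) ∈
      {r : ℝ | ∃ B : Set P2, B ⊆ latticeBox N ∧ simplyConn B ∧
        r = |∑ᶠ i ∈ B, w i| / (bdCard B : ℝ)} :=
    ⟨latticeBox N, subset_rfl, ⟨⟨(0, 0), by rw [mem_box_iff]; simp⟩, box_finite N,
      connSub_box N, connSub_boxCompl N⟩, rfl⟩
  have h1 := le_csSup (mset_finite w N).bddAbove hmem
  have h2 : (0 : ℝ) ≤ |∑ᶠ i ∈ latticeBox N, w i| / (bdCard (latticeBox N) : ℝ) :=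
    div_nonneg (abs_nonneg _) (Nat.cast_nonneg _)
  linarith

lemma main_aux (w : P2 → ℝ) (N : ℕ) : ∀ n : ℕ, ∀ A : Set P2,
    A ⊆ latticeBox N → A.Nonempty → connSub A → (latticeBox N \ A).ncard ≤ n →
    (∑ᶠ i ∈ A, w i) / (bdCard A : ℝ) ≤
      sSup {r : ℝ | ∃ B : Set P2, B ⊆ latticeBox N ∧ simplyConn B ∧
        r = |∑ᶠ i ∈ B, w i| / (bdCard B : ℝ)} := by
  have base : ∀ A : Set P2, A ⊆ latticeBox N → A.Nonempty → connSub A → connSub Aᶜ →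
      (∑ᶠ i ∈ A, w i) / (bdCard A : ℝ) ≤
      sSup {r : ℝ | ∃ B : Set P2, B ⊆ latticeBox N ∧ simplyConn B ∧
        r = |∑ᶠ i ∈ B, w i| / (bdCard B : ℝ)} := by
    intro A hsub hne hconn hcompl
    have hfin := (box_finite N).subset hsub
    have hb : (0 : ℝ) < (bdCard A : ℝ) := by exact_mod_cast bdCard_pos hfin hne
    have hmem : |∑ᶠ i ∈ A, w i| / (bdCard A : ℝ) ∈
        {r : ℝ | ∃ B : Set P2, B ⊆ latticeBox N ∧ simplyConn B ∧
          r = |∑ᶠ i ∈ B, w i| / (bdCard B : ℝ)} :=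
      ⟨A, hsub, ⟨hne, hfin, hconn, hcompl⟩, rfl⟩
    calc (∑ᶠ i ∈ A, w i) / (bdCard A : ℝ) ≤ |∑ᶠ i ∈ A, w i| / (bdCard A : ℝ) :=
          (div_le_div_iff_of_pos_right hb).mpr (le_abs_self _)
      _ ≤ _ := le_csSup (mset_finite w N).bddAbove hmem
  intro n
  induction n with
  | zero =>
    intro A hsub hne hconn hcard
    rcases compl_conn_or_hole hsub with hcompl | ⟨x, hx, hfinH⟩
    · exact base A hsub hne hconn hcompl
    · exfalso
      have hx_box : x ∈ latticeBox N := finite_comp_subset_box hsub hx hfinH (mem_comp_self hx)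
      have hpos : 0 < (latticeBox N \ A).ncard := by
        rw [Set.ncard_pos ((box_finite N).diff (t := A))]
        exact ⟨x, hx_box, hx⟩
      omega
  | succ n ih =>
    intro A hsub hne hconn hcard
    rcases compl_conn_or_hole hsub with hcompl | ⟨x, hx, hfinH⟩
    · exact base A hsub hne hconn hcompl
    · have hxA : x ∉ A := hx
      set H := comp Aᶜ x with hH
      have hHsub : H ⊆ latticeBox N := finite_comp_subset_box hsub hx hfinH
      have hHne : H.Nonempty := ⟨x, mem_comp_self hx⟩
      have hAfin := (box_finite N).subset hsub
      have hA'sub : A ∪ H ⊆ latticeBox N := Set.union_subset hsub hHsub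
      have hA'fin : (A ∪ H).Finite := hAfin.union hfinH
      have hdisjAH : Disjoint A H := by
        rw [Set.disjoint_left]
        intro p hp hpH
        exact (comp_subset hpH) hp
      have hx_box : x ∈ latticeBox N := hHsub (mem_comp_self hx)
      have hcard' : (latticeBox N \ (A ∪ H)).ncard ≤ n := by
        have hss : latticeBox N \ (A ∪ H) ⊂ latticeBox N \ A := by
          constructor
          · exact Set.diff_subset_diff_right Set.subset_union_left
          · intro hsupset
            have hmem : x ∈ latticeBox N \ (A ∪ H) := hsupset ⟨hx_box, hxA⟩
            exact hmem.2 (Set.mem_union_right _ (mem_comp_self hx))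
        have := Set.ncard_lt_ncard hss ((box_finite N).diff (t := A))
        omega
      have hrec := ih (A ∪ H) hA'sub (Set.Nonempty.mono Set.subset_union_left hne)
        (union_hole_connSub hne hconn hxA) hcard'
      have hsum : ∑ᶠ i ∈ A ∪ H, w i = (∑ᶠ i ∈ A, w i) + ∑ᶠ i ∈ H, w i :=
        finsum_mem_union hdisjAH hAfin hfinH
      have hbd : bdCard A = bdCard (A ∪ H) + bdCard H := by
        rw [bdCard, edgeBoundary_decomp hxA,
          Set.ncard_union_eq (edgeBoundary_decomp_disjoint hxA)
            (edgeBoundary_finite_s6 hA'fin) (edgeBoundary_finite_s6 hfinH)]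
        rfl
      have hb1 : (0 : ℝ) < (bdCard (A ∪ H) : ℝ) := by
        exact_mod_cast bdCard_pos hA'fin (Set.Nonempty.mono Set.subset_union_left hne)
      have hb2 : (0 : ℝ) < (bdCard H : ℝ) := by exact_mod_cast bdCard_pos hfinH hHne
      have hHsc : simplyConn H :=
        ⟨hHne, hfinH, hole_connSub hxA, hole_compl_connSub hne hconn hxA⟩
      have hmemH : |∑ᶠ i ∈ H, w i| / (bdCard H : ℝ) ∈
          {r : ℝ | ∃ B : Set P2, B ⊆ latticeBox N ∧ simplyConn B ∧
            r = |∑ᶠ i ∈ B, w i| / (bdCard B : ℝ)} := ⟨H, hHsub, hHsc, rfl⟩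
      have hm2 : (-(∑ᶠ i ∈ H, w i)) / (bdCard H : ℝ) ≤
          sSup {r : ℝ | ∃ B : Set P2, B ⊆ latticeBox N ∧ simplyConn B ∧
            r = |∑ᶠ i ∈ B, w i| / (bdCard B : ℝ)} :=
        le_trans ((div_le_div_iff_of_pos_right hb2).mpr (neg_le_abs _))
          (le_csSup (mset_finite w N).bddAbove hmemH)
      have hrw : ∑ᶠ i ∈ A, w i = (∑ᶠ i ∈ A ∪ H, w i) + (-(∑ᶠ i ∈ H, w i)) := by
        rw [hsum]; ring
      rw [hrw, hbd]
      push_cast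
      exact mediant_le hb1 hb2 hrec hm2

end Main



/-- Deterministic reduction lemma: for any site weights `w : ℤ² → ℝ` and any finite
nonempty connected `A ⊆ Λ_N`, the ratio `w(A)/|∂A|` is at most the maximum of
`|w(B)|/|∂B|` over nonempty simply connected `B ⊆ Λ_N`; consequently the maximum of
`w(A)/|∂A|` over nonempty connected subsets of `Λ_N` containing the origin is at most
that same simply connected maximum. -/
theorem reduction_to_simply_connected_animals (w : ℤ × ℤ → ℝ) (N : ℕ) (hN : 1 ≤ N) :
    (∀ A : Set (ℤ × ℤ), A ⊆ latticeBox N → A.Nonempty → connSub A →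
      (∑ᶠ i ∈ A, w i) / (bdCard A : ℝ) ≤
        sSup {r | ∃ B : Set (ℤ × ℤ), B ⊆ latticeBox N ∧ simplyConn B ∧
          r = |∑ᶠ i ∈ B, w i| / (bdCard B : ℝ)}) ∧
    sSup {r | ∃ A : Set (ℤ × ℤ), A ⊆ latticeBox N ∧ (0, 0) ∈ A ∧ A.Nonempty ∧ connSub A ∧
        r = (∑ᶠ i ∈ A, w i) / (bdCard A : ℝ)} ≤
      sSup {r | ∃ B : Set (ℤ × ℤ), B ⊆ latticeBox N ∧ simplyConn B ∧
        r = |∑ᶠ i ∈ B, w i| / (bdCard B : ℝ)} := by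
  constructor
  · intro A hsub hne hconn
    exact main_aux w N ((latticeBox N \ A).ncard) A hsub hne hconn le_rfl
  · apply Real.sSup_le
    · rintro r ⟨A, hsub, h0, hne, hconn, rfl⟩
      exact main_aux w N ((latticeBox N \ A).ncard) A hsub hne hconn le_rfl
    · exact mset_sSup_nonneg w N
end
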